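/- Let N ≥ 1, let S ⊆ ℝ^N be compact, let h ∈ B_S, and let D ⊆ ℝ^N be a bounded measurable set with nonempty interior. Define the sequence f_0 = P_S(χ_D h) and f_{k+1} = T_h^{(D)} f_k for k ≥ 0. Then the norms of the iterates converge to the norm of h: lim_{k→∞} ‖f_k‖ = ‖h‖. -/

import Mathlib

open MeasureTheory FourierTransform Filter

noncomputable section

/-- The Hilbert space `L²(ℝᴺ; ℂ)` of square-integrable functions on `ℝᴺ`. -/
abbrev L2Space (N : ℕ) : Type :=
  Lp ℂ 2 (volume : Measure (EuclideanSpace ℝ (Fin N)))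

/-- `f ∈ L²(ℝᴺ)` is bandlimited to `S`: its Fourier transform vanishes (a.e.) outside `S`;
equivalently, `f` agrees a.e. with the inverse Fourier transform of an integrable function `F`
vanishing outside `S`. -/
def IsBandlimited {N : ℕ} (S : Set (EuclideanSpace ℝ (Fin N))) (f : L2Space N) : Prop :=
  ∃ F : EuclideanSpace ℝ (Fin N) → ℂ,
    Integrable F ∧ (∀ k, k ∉ S → F k = 0) ∧
      (f : EuclideanSpace ℝ (Fin N) → ℂ) =ᵐ[volume] 𝓕⁻ F

/-- Multiplication of `f ∈ L²` by the indicator function `χ_D`, as an element of `L²`. -/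
def chiMul {N : ℕ} {D : Set (EuclideanSpace ℝ (Fin N))} (hD : MeasurableSet D)
    (f : L2Space N) : L2Space N :=
  ((Lp.memLp f).indicator hD).toLp (D.indicator f)

/-- The orthogonal projection of `L²(ℝᴺ)` onto a closed subspace `K`. -/
def projOf {N : ℕ} (K : Submodule ℂ (L2Space N)) (hK : IsClosed (K : Set (L2Space N))) :
    L2Space N → L2Space N :=
  haveI : CompleteSpace K := hK.completeSpace_coe
  fun f => (K.orthogonalProjectionOnto f : L2Space N)

/-- The operator `T_h^{(D)} f = P_S (f + χ_D (h − f))` (single region). -/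
def Tsingle {N : ℕ} (K : Submodule ℂ (L2Space N)) (hK : IsClosed (K : Set (L2Space N)))
    {D : Set (EuclideanSpace ℝ (Fin N))} (hD : MeasurableSet D)
    (h f : L2Space N) : L2Space N :=
  projOf K hK (f + chiMul hD (h - f))

namespace PGaux

/-! ### Auxiliary results for the Papoulis–Gerchberg convergence theorem -/

open Complex Metric

/-- Iterates of a positive symmetric linear contraction on a complex Hilbert space
converge to a fixed point. -/
theorem iter_tendsto_fixedPoint {E : Type*} [NormedAddCommGroup E] [InnerProductSpace ℂ E]
    [CompleteSpace E] (A : E →ₗ[ℂ] E)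
    (hsym : ∀ x y : E, (inner ℂ (A x) y : ℂ) = inner ℂ x (A y))
    (hpos : ∀ x : E, 0 ≤ (inner ℂ (A x) x : ℂ).re)
    (hnorm : ∀ x : E, ‖A x‖ ≤ ‖x‖) (g : E) :
    ∃ u : E, A u = u ∧ Tendsto (fun k => (⇑A)^[k] g) atTop (nhds u) := by
  set s : ℕ → E := fun k => (⇑A)^[k] g with hs_def
  have hs : ∀ k, s (k + 1) = A (s k) := by
    intro k; simp [hs_def, Function.iterate_succ_apply']
  have hAcont : Continuous (⇑A) :=
    AddMonoidHomClass.continuous_of_bound A 1 (fun x => by simpa using hnorm x)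
  -- shifted inner products
  have key : ∀ k m : ℕ, (inner ℂ (s k) (s m) : ℂ) = inner ℂ g (s (k + m)) := by
    intro k
    induction k with
    | zero => intro m; simp [hs_def]
    | succ k ih =>
      intro m
      have : (inner ℂ (s (k+1)) (s m) : ℂ) = inner ℂ (s k) (s (m+1)) := by
        rw [hs k, hs m, hsym]
      rw [this, ih (m+1)]
      congr 2
      omega
  set b : ℕ → ℝ := fun k => ‖s k‖ ^ 2 with hb_def
  have hb_anti : Antitone b := by
    apply antitone_nat_of_succ_le
    intro n
    have := hnorm (s n)
    rw [← hs n] at this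
    exact pow_le_pow_left₀ (norm_nonneg _) this 2
  have hb_nonneg : ∀ n, 0 ≤ b n := fun n => sq_nonneg _
  have hb_bdd : BddBelow (Set.range b) := ⟨0, by rintro x ⟨n, rfl⟩; exact hb_nonneg n⟩
  set c : ℝ := ⨅ n, b n with hc_def
  have hb_lim : Tendsto b atTop (nhds c) := tendsto_atTop_ciInf hb_anti hb_bdd
  have hc_le : ∀ n, c ≤ b n := fun n => ciInf_le hb_bdd n
  -- distance formula for same-parity indices
  have hdist : ∀ k m p : ℕ, k + m = p + p →
      ‖s k - s m‖ ^ 2 = b k + b m - 2 * b p := by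
    intro k m p hp
    have h1 : (inner ℂ (s k) (s m) : ℂ) = inner ℂ (s p) (s p) := by
      rw [key k m, key p p, hp]
    have := @norm_sub_sq ℂ E _ _ _ (s k) (s m)
    rw [this, h1, inner_self_eq_norm_sq]
    simp [hb_def]; ring
  -- even subsequence is Cauchy
  have hcauchy : CauchySeq (fun k => s (2 * k)) := by
    rw [Metric.cauchySeq_iff]
    intro ε hε
    have hε2 : 0 < ε ^ 2 / 4 := by positivity
    obtain ⟨M, hM⟩ := (Metric.tendsto_atTop.1 hb_lim) (ε ^ 2 / 4) hε2
    refine ⟨M, fun m hm n hn => ?_⟩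
    have hbm : b (2 * m) < c + ε ^ 2 / 4 := by
      have := hM (2 * m) (by omega)
      rw [Real.dist_eq, abs_lt] at this
      linarith [this.2]
    have hbn : b (2 * n) < c + ε ^ 2 / 4 := by
      have := hM (2 * n) (by omega)
      rw [Real.dist_eq, abs_lt] at this
      linarith [this.2]
    have hmid : c ≤ b (m + n) := hc_le _
    have hd : ‖s (2 * m) - s (2 * n)‖ ^ 2 = b (2 * m) + b (2 * n) - 2 * b (m + n) :=
      hdist _ _ (m + n) (by ring)
    have hlt : ‖s (2 * m) - s (2 * n)‖ ^ 2 < ε ^ 2 := by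
      rw [hd]; linarith
    rw [dist_eq_norm]
    nlinarith [norm_nonneg (s (2 * m) - s (2 * n))]
  obtain ⟨u, hu⟩ := cauchySeq_tendsto_of_complete hcauchy
  -- odd subsequence tends to A u
  have hodd : Tendsto (fun k => s (2 * k + 1)) atTop (nhds (A u)) := by
    have : (fun k => s (2 * k + 1)) = (⇑A) ∘ (fun k => s (2 * k)) := by
      funext k; simp [hs, Function.comp]
    rw [this]
    exact (hAcont.tendsto u).comp hu
  -- even+2 subsequence tends to both u and A (A u)
  have hAAu : A (A u) = u := by
    have h1 : Tendsto (fun k => s (2 * k + 2)) atTop (nhds (A (A u))) := by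
      have : (fun k => s (2 * k + 2)) = (⇑A) ∘ (fun k => s (2 * k + 1)) := by
        funext k; simp [hs, Function.comp]
      rw [this]
      exact (hAcont.tendsto (A u)).comp hodd
    have h2 : Tendsto (fun k => s (2 * k + 2)) atTop (nhds u) := by
      have : (fun k => s (2 * k + 2)) = (fun k => s (2 * k)) ∘ (fun k => k + 1) := by
        funext k; show s (2*k+2) = s (2*(k+1)); congr 1
      rw [this]
      exact hu.comp (tendsto_add_atTop_nat 1)
    exact tendsto_nhds_unique h1 h2
  -- fixed point via positivity
  have hfix : A u = u := by
    set q : E := u - A u with hq_def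
    have hAq : A q = -q := by
      simp only [hq_def, map_sub, hAAu]
      abel
    have h0 : (0:ℝ) ≤ (inner ℂ (A q) q : ℂ).re := hpos q
    rw [hAq, inner_neg_left] at h0
    have : (inner ℂ q q : ℂ).re = ‖q‖ ^ 2 := @inner_self_eq_norm_sq ℂ E _ _ _ q
    simp only [Complex.neg_re] at h0
    have hq0 : ‖q‖ ^ 2 ≤ 0 := by rw [← this]; linarith
    have : q = 0 := by
      have := norm_nonneg q
      have h2 : ‖q‖ = 0 := by nlinarith
      exact norm_eq_zero.1 h2
    rw [hq_def] at this
    have := sub_eq_zero.1 this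
    exact this.symm
  refine ⟨u, hfix, ?_⟩
  -- full sequence converges: combine parities
  rw [Metric.tendsto_atTop]
  intro ε hε
  obtain ⟨N1, hN1⟩ := Metric.tendsto_atTop.1 hu ε hε
  have hodd' : Tendsto (fun k => s (2 * k + 1)) atTop (nhds u) := by rwa [hfix] at hodd
  obtain ⟨N2, hN2⟩ := Metric.tendsto_atTop.1 hodd' ε hε
  refine ⟨2 * (N1 + N2) + 2, fun n hn => ?_⟩
  rcases Nat.even_or_odd n with ⟨k, hk⟩ | ⟨k, hk⟩
  · have hk' : n = 2 * k := by omega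
    have : k ≥ N1 := by omega
    have := hN1 k this
    rwa [hk']
  · have hk' : n = 2 * k + 1 := by omega
    have : k ≥ N2 := by omega
    have := hN2 k this
    rwa [hk']

/-- A function whose Fourier support is bounded and whose inverse Fourier transform
vanishes on a ball has identically vanishing inverse Fourier transform. -/
theorem fourierInv_eqZero_of_eqZero_ball {N : ℕ}
    (F : EuclideanSpace ℝ (Fin N) → ℂ) (hF : Integrable F)
    (R : ℝ) (hR : 0 ≤ R) (hsupp : ∀ ξ : EuclideanSpace ℝ (Fin N), R < ‖ξ‖ → F ξ = 0)
    (x₀ : EuclideanSpace ℝ (Fin N)) (ε : ℝ) (hε : 0 < ε)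
    (hzero : ∀ x ∈ ball x₀ ε, 𝓕⁻ F x = 0)
    (z : EuclideanSpace ℝ (Fin N)) : 𝓕⁻ F z = 0 := by
  set v := z - x₀ with hv_def
  set a : EuclideanSpace ℝ (Fin N) → ℝ := fun ξ => inner ℝ ξ v with ha_def
  set bc : EuclideanSpace ℝ (Fin N) → ℝ := fun ξ => inner ℝ ξ x₀ with hbc_def
  set C : ℝ := R * ‖v‖ + 1 with hC_def
  have hC_pos : 0 < C := by positivity
  have ha_bound : ∀ ξ, F ξ ≠ 0 → |a ξ| ≤ C := by
    intro ξ hξ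
    have hξR : ‖ξ‖ ≤ R := by
      by_contra hcon
      exact hξ (hsupp ξ (by linarith [not_le.1 hcon]))
    calc |a ξ| ≤ ‖ξ‖ * ‖v‖ := abs_real_inner_le_norm ξ v
      _ ≤ R * ‖v‖ := by
          apply mul_le_mul_of_nonneg_right hξR (norm_nonneg v)
      _ ≤ C := by rw [hC_def]; linarith
  -- the entire extension in the direction v
  set Φ : ℂ → ℂ := fun w =>
    ∫ ξ, Complex.exp (((2 * Real.pi * bc ξ : ℝ) : ℂ) * Complex.I
      + ((2 * Real.pi * a ξ : ℝ) : ℂ) * Complex.I * w) * F ξ with hΦ_def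
  have ha_cont : Continuous a := by
    exact continuous_id.inner continuous_const
  have hbc_cont : Continuous bc := by
    exact continuous_id.inner continuous_const
  -- measurability of the integrand for every w
  have hmeas : ∀ w : ℂ, AEStronglyMeasurable (fun ξ =>
      Complex.exp (((2 * Real.pi * bc ξ : ℝ) : ℂ) * Complex.I
      + ((2 * Real.pi * a ξ : ℝ) : ℂ) * Complex.I * w) * F ξ) volume := by
    intro w
    apply AEStronglyMeasurable.mul _ hF.1
    apply Continuous.aestronglyMeasurable
    apply Complex.continuous_exp.comp
    apply Continuous.add
    · exact ((Complex.continuous_ofReal.comp (continuous_const.mul hbc_cont)).mul continuous_const)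
    · exact (((Complex.continuous_ofReal.comp (continuous_const.mul ha_cont)).mul continuous_const).mul
        continuous_const)
  -- norm of the integrand
  have hnormint : ∀ (w : ℂ) (ξ : EuclideanSpace ℝ (Fin N)),
      ‖Complex.exp (((2 * Real.pi * bc ξ : ℝ) : ℂ) * Complex.I
        + ((2 * Real.pi * a ξ : ℝ) : ℂ) * Complex.I * w) * F ξ‖
      = Real.exp (-(2 * Real.pi * a ξ) * w.im) * ‖F ξ‖ := by
    intro w ξ
    rw [norm_mul, Complex.norm_exp]
    congr 2
    simp only [Complex.add_re, Complex.mul_re, Complex.mul_im, Complex.I_re, Complex.I_im,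
      Complex.ofReal_re, Complex.ofReal_im]
    ring
  -- integrability of the integrand for each w
  have hint : ∀ w : ℂ, Integrable (fun ξ =>
      Complex.exp (((2 * Real.pi * bc ξ : ℝ) : ℂ) * Complex.I
      + ((2 * Real.pi * a ξ : ℝ) : ℂ) * Complex.I * w) * F ξ) volume := by
    intro w
    apply Integrable.mono' ((hF.norm).const_mul (Real.exp (2 * Real.pi * C * |w.im|))) (hmeas w)
    filter_upwards with ξ
    rw [hnormint w ξ]
    rcases eq_or_ne (F ξ) 0 with h0 | h0
    · simp only [h0, norm_zero, mul_zero]; positivity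
    · apply mul_le_mul_of_nonneg_right _ (norm_nonneg _)
      rw [Real.exp_le_exp]
      calc -(2 * Real.pi * a ξ) * w.im ≤ |(-(2 * Real.pi * a ξ) * w.im)| := le_abs_self _
        _ = 2 * Real.pi * |a ξ| * |w.im| := by
            rw [abs_mul, abs_neg, abs_mul, abs_mul, _root_.abs_of_nonneg (by norm_num : (0:ℝ) ≤ 2), _root_.abs_of_nonneg Real.pi_pos.le]
        _ ≤ 2 * Real.pi * C * |w.im| := by
            apply mul_le_mul_of_nonneg_right _ (abs_nonneg _)
            have := ha_bound ξ h0
            nlinarith [Real.pi_pos]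
  -- Φ is differentiable everywhere
  have hdiff : Differentiable ℂ Φ := by
    intro w₀
    set bound : EuclideanSpace ℝ (Fin N) → ℝ := fun ξ =>
      (2 * Real.pi * C * Real.exp (2 * Real.pi * C * (|w₀.im| + 1))) * ‖F ξ‖ with hbound_def
    have key := hasDerivAt_integral_of_dominated_loc_of_deriv_le (μ := volume)
      (F := fun (w : ℂ) ξ => Complex.exp (((2 * Real.pi * bc ξ : ℝ) : ℂ) * Complex.I
        + ((2 * Real.pi * a ξ : ℝ) : ℂ) * Complex.I * w) * F ξ)
      (F' := fun (w : ℂ) ξ => ((2 * Real.pi * a ξ : ℝ) : ℂ) * Complex.I *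
        (Complex.exp (((2 * Real.pi * bc ξ : ℝ) : ℂ) * Complex.I
        + ((2 * Real.pi * a ξ : ℝ) : ℂ) * Complex.I * w) * F ξ))
      (x₀ := w₀) (bound := bound) (Metric.ball_mem_nhds w₀ one_pos)
      (Eventually.of_forall (fun w => hmeas w)) (hint w₀) ?_ ?_ ?_ ?_
    · exact key.2.differentiableAt
    · -- measurability of F' w₀
      apply AEStronglyMeasurable.mul _ ((hmeas w₀))
      apply Continuous.aestronglyMeasurable
      exact ((Complex.continuous_ofReal.comp (continuous_const.mul ha_cont)).mul continuous_const)
    · -- bound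
      filter_upwards with ξ
      intro w hw
      rw [norm_mul, hnormint w ξ, hbound_def]
      rcases eq_or_ne (F ξ) 0 with h0 | h0
      · simp [h0]
      · have haξ := ha_bound ξ h0
        have him : |w.im| ≤ |w₀.im| + 1 := by
          have h1 : |w.im - w₀.im| ≤ ‖w - w₀‖ := by
            rw [← Complex.sub_im]; exact Complex.abs_im_le_norm _
          have h2 : ‖w - w₀‖ < 1 := by
            rw [← dist_eq_norm]; exact mem_ball.1 hw
          have := abs_sub_abs_le_abs_sub w.im w₀.im
          linarith
        have hnexp : ‖((2 * Real.pi * a ξ : ℝ) : ℂ) * Complex.I‖ = 2 * Real.pi * |a ξ| := by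
          rw [norm_mul, Complex.norm_I, mul_one, Complex.norm_real, Real.norm_eq_abs,
            abs_mul, abs_mul, _root_.abs_of_nonneg (by norm_num : (0:ℝ) ≤ 2),
            _root_.abs_of_nonneg Real.pi_pos.le]
        rw [hnexp]
        have hexp_le : Real.exp (-(2 * Real.pi * a ξ) * w.im)
            ≤ Real.exp (2 * Real.pi * C * (|w₀.im| + 1)) := by
          rw [Real.exp_le_exp]
          calc -(2 * Real.pi * a ξ) * w.im ≤ |(-(2 * Real.pi * a ξ) * w.im)| := le_abs_self _
            _ = 2 * Real.pi * |a ξ| * |w.im| := by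
                rw [abs_mul, abs_neg, abs_mul, abs_mul, _root_.abs_of_nonneg (by norm_num : (0:ℝ) ≤ 2), _root_.abs_of_nonneg Real.pi_pos.le]
            _ ≤ 2 * Real.pi * C * (|w₀.im| + 1) := by
                have h1 : 2 * Real.pi * |a ξ| ≤ 2 * Real.pi * C := by
                  nlinarith [Real.pi_pos]
                have h2 : (0:ℝ) ≤ 2 * Real.pi * |a ξ| := by positivity
                nlinarith [abs_nonneg w.im, abs_nonneg (a ξ)]
        calc 2 * Real.pi * |a ξ| * (Real.exp (-(2 * Real.pi * a ξ) * w.im) * ‖F ξ‖)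
            ≤ 2 * Real.pi * C * (Real.exp (2 * Real.pi * C * (|w₀.im| + 1)) * ‖F ξ‖) := by
              have h1 : 2 * Real.pi * |a ξ| ≤ 2 * Real.pi * C := by nlinarith [Real.pi_pos]
              exact mul_le_mul h1
                (mul_le_mul_of_nonneg_right hexp_le (norm_nonneg _))
                (by positivity) (by positivity)
          _ = 2 * Real.pi * C * Real.exp (2 * Real.pi * C * (|w₀.im| + 1)) * ‖F ξ‖ := by ring
    · -- integrability of bound
      exact (hF.norm).const_mul _
    · -- differentiability of the integrand
      filter_upwards with ξ
      intro w hw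
      have h1 : HasDerivAt (fun w : ℂ => ((2 * Real.pi * bc ξ : ℝ) : ℂ) * Complex.I
          + ((2 * Real.pi * a ξ : ℝ) : ℂ) * Complex.I * w)
          (((2 * Real.pi * a ξ : ℝ) : ℂ) * Complex.I) w := by
        simpa using ((hasDerivAt_id w).const_mul
          (((2 * Real.pi * a ξ : ℝ) : ℂ) * Complex.I)).const_add
          (((2 * Real.pi * bc ξ : ℝ) : ℂ) * Complex.I)
      have h2 := (h1.cexp).mul_const (F ξ)
      refine h2.congr_deriv ?_
      ring
  -- Φ agrees with 𝓕⁻ F along the real direction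
  have hΦ_real : ∀ t : ℝ, Φ (t : ℂ) = 𝓕⁻ F (x₀ + t • v) := by
    intro t
    rw [Real.fourierInv_eq', hΦ_def]
    apply integral_congr_ae
    filter_upwards with ξ
    rw [smul_eq_mul]
    congr 1
    have hin : (inner ℝ ξ (x₀ + t • v) : ℝ) = bc ξ + t * a ξ := by
      rw [inner_add_right, real_inner_smul_right]
    rw [hin]
    push_cast
    ring
  -- Φ vanishes frequently near 0
  have hΦ_zero : ∀ᶠ (n : ℕ) in atTop, True := by simp
  set t' : ℕ → ℝ := fun n => (ε / (2 * (‖v‖ + 1))) / (n + 1) with ht'_def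
  have ht'_pos : ∀ n, 0 < t' n := by
    intro n
    apply div_pos (div_pos hε (by positivity)) (by positivity)
  have ht'_zeros : ∀ n, Φ ((t' n : ℝ) : ℂ) = 0 := by
    intro n
    rw [hΦ_real]
    apply hzero
    rw [mem_ball, dist_eq_norm, add_sub_cancel_left, norm_smul]
    have h1 : ‖(t' n : ℝ)‖ = t' n := by
      rw [Real.norm_eq_abs, abs_of_pos (ht'_pos n)]
    rw [h1]
    have h2 : t' n ≤ ε / (2 * (‖v‖ + 1)) := by
      rw [ht'_def]
      apply div_le_self (div_pos hε (by positivity)).le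
      simp
    have h3 : t' n * ‖v‖ ≤ (ε / (2 * (‖v‖ + 1))) * (‖v‖ + 1) := by
      apply mul_le_mul h2 (by linarith [norm_nonneg v]) (norm_nonneg v)
      positivity
    have h4 : (ε / (2 * (‖v‖ + 1))) * (‖v‖ + 1) = ε / 2 := by
      field_simp
    rw [h4] at h3
    linarith
  have hfreq : ∃ᶠ w in nhdsWithin (0 : ℂ) {(0:ℂ)}ᶜ, Φ w = 0 := by
    have htend : Tendsto (fun n : ℕ => ((t' n : ℝ) : ℂ)) atTop (nhdsWithin (0:ℂ) {(0:ℂ)}ᶜ) := by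
      apply tendsto_nhdsWithin_of_tendsto_nhds_of_eventually_within
      · have : Tendsto t' atTop (nhds 0) := by
          have h5 := (tendsto_const_div_atTop_nhds_zero_nat
            (ε / (2 * (‖v‖ + 1)))).comp (tendsto_add_atTop_nat 1)
          have hcomp : t' = (fun m : ℕ => ε / (2 * (‖v‖ + 1)) / (m : ℝ))
              ∘ (fun n : ℕ => n + 1) := by
            funext n
            simp only [ht'_def, Function.comp_apply, Nat.cast_add, Nat.cast_one]
          rw [hcomp]
          exact h5
        have := (Complex.continuous_ofReal.tendsto 0).comp this
        rw [Complex.ofReal_zero] at this; exact this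
      · filter_upwards with n
        simp only [Set.mem_compl_iff, Set.mem_singleton_iff]
        intro hcon
        have := ht'_pos n
        rw [Complex.ofReal_eq_zero] at hcon
        linarith [hcon ▸ this]
    exact htend.frequently (Frequently.of_forall (fun n => ht'_zeros n))
  -- identity theorem
  have hEq : Set.EqOn Φ 0 Set.univ := by
    have hanal : AnalyticOnNhd ℂ Φ Set.univ := fun w _ => hdiff.analyticAt w
    exact hanal.eqOn_zero_of_preconnected_of_frequently_eq_zero isPreconnected_univ
      (Set.mem_univ 0) hfreq
  have := hEq (Set.mem_univ (1 : ℂ))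
  have h1 : Φ ((1:ℝ) : ℂ) = 𝓕⁻ F (x₀ + (1:ℝ) • v) := hΦ_real 1
  rw [show ((1:ℝ):ℂ) = (1:ℂ) by norm_num, this] at h1
  have h2 : x₀ + (1:ℝ) • v = z := by
    rw [one_smul, hv_def]
    abel
  rw [h2] at h1
  exact h1.symm

variable {N : ℕ} {D : Set (EuclideanSpace ℝ (Fin N))} (hD : MeasurableSet D)

lemma chiMul_coeFn (f : L2Space N) :
    (chiMul hD f : EuclideanSpace ℝ (Fin N) → ℂ) =ᵐ[volume] D.indicator f :=
  MemLp.coeFn_toLp _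

lemma chiMul_add (f g : L2Space N) :
    chiMul hD (f + g) = chiMul hD f + chiMul hD g := by
  classical
  apply Lp.ext
  filter_upwards [chiMul_coeFn hD (f + g), chiMul_coeFn hD f, chiMul_coeFn hD g,
    Lp.coeFn_add f g, Lp.coeFn_add (chiMul hD f) (chiMul hD g)] with x e1 e2 e3 e4 e5
  rw [e1, e5, Pi.add_apply, e2, e3, Set.indicator_apply, Set.indicator_apply,
    Set.indicator_apply]
  split_ifs with hx
  · exact e4
  · simp

lemma chiMul_smul (c : ℂ) (f : L2Space N) :
    chiMul hD (c • f) = c • chiMul hD f := by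
  classical
  apply Lp.ext
  filter_upwards [chiMul_coeFn hD (c • f), chiMul_coeFn hD f,
    Lp.coeFn_smul c f, Lp.coeFn_smul c (chiMul hD f)] with x e1 e2 e3 e4
  rw [e1, e4, Pi.smul_apply, e2, Set.indicator_apply, Set.indicator_apply]
  split_ifs with hx
  · exact e3
  · simp

lemma chiMul_inner_symm (f g : L2Space N) :
    (inner ℂ (chiMul hD f) g : ℂ) = inner ℂ f (chiMul hD g) := by
  classical
  rw [MeasureTheory.L2.inner_def, MeasureTheory.L2.inner_def]
  apply integral_congr_ae
  filter_upwards [chiMul_coeFn hD f, chiMul_coeFn hD g] with x e1 e2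
  rw [e1, e2]
  simp only [RCLike.inner_apply, Set.indicator_apply]
  split_ifs with hx
  · rfl
  · simp

lemma chiMul_inner_compl (f : L2Space N) :
    (inner ℂ (chiMul hD f) (f - chiMul hD f) : ℂ) = 0 := by
  classical
  rw [MeasureTheory.L2.inner_def]
  rw [integral_eq_zero_of_ae]
  filter_upwards [chiMul_coeFn hD f, Lp.coeFn_sub f (chiMul hD f)] with x e1 e2
  rw [e2, Pi.sub_apply, e1]
  simp only [RCLike.inner_apply, Set.indicator_apply]
  split_ifs with hx
  · simp
  · simp

lemma chiMul_norm_sq (f : L2Space N) :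
    ‖f‖ ^ 2 = ‖chiMul hD f‖ ^ 2 + ‖f - chiMul hD f‖ ^ 2 := by
  have h0 := chiMul_inner_compl hD f
  have h1 := @norm_add_sq ℂ _ _ _ _ (chiMul hD f) (f - chiMul hD f)
  rw [add_sub_cancel] at h1
  rw [h1, h0]
  simp

lemma chiMul_compl_norm_le (f : L2Space N) : ‖f - chiMul hD f‖ ≤ ‖f‖ := by
  have := chiMul_norm_sq hD f
  nlinarith [norm_nonneg (f - chiMul hD f), norm_nonneg f, sq_nonneg ‖chiMul hD f‖]

lemma chiMul_eq_zero_of_compl_norm_eq (f : L2Space N)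
    (h : ‖f - chiMul hD f‖ = ‖f‖) : chiMul hD f = 0 := by
  have h1 := chiMul_norm_sq hD f
  rw [h] at h1
  have h2 : ‖chiMul hD f‖ = 0 := by nlinarith [norm_nonneg (chiMul hD f)]
  exact norm_eq_zero.1 h2

end PGaux

open PGaux

set_option maxHeartbeats 1600000

/-- For `h ∈ B_S` and `D` a bounded measurable set with nonempty interior,
the norms of the iterates `f_0 = P_S(χ_D h)`, `f_{k+1} = T_h^{(D)} f_k` converge to `‖h‖`. -/
theorem iterates_norm_tendsto_single (N : ℕ) (hN : 1 ≤ N)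
    (S : Set (EuclideanSpace ℝ (Fin N))) (hS : IsCompact S)
    (K : Submodule ℂ (L2Space N))
    (hKset : (K : Set (L2Space N)) = {f : L2Space N | IsBandlimited S f})
    (hK : IsClosed (K : Set (L2Space N)))
    (h : L2Space N) (hh : IsBandlimited S h)
    (D : Set (EuclideanSpace ℝ (Fin N))) (hD : MeasurableSet D)
    (hDbdd : Bornology.IsBounded D) (hDint : (interior D).Nonempty)
    (f : ℕ → L2Space N) (hf0 : f 0 = projOf K hK (chiMul hD h))
    (hfrec : ∀ k : ℕ, f (k + 1) = Tsingle K hK hD h (f k)) :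
    Tendsto (fun k => ‖f k‖) atTop (nhds ‖h‖) := by
  classical
  haveI : CompleteSpace K := hK.completeSpace_coe
  -- Properties of the projection `P`.
  set P : L2Space N → L2Space N := projOf K hK with hP_def
  have hP_eq : ∀ x, P x = (K.orthogonalProjectionOnto x : L2Space N) := fun _ => rfl
  have hP_mem : ∀ x, P x ∈ K := fun x => SetLike.coe_mem _
  have hP_add : ∀ x y, P (x + y) = P x + P y := by
    intro x y; simp only [hP_eq, map_add, Submodule.coe_add]
  have hP_sub : ∀ x y, P (x - y) = P x - P y := by
    intro x y; simp only [hP_eq, map_sub, Submodule.coe_sub]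
  have hP_id : ∀ x ∈ K, P x = x := by
    intro x hx; rw [hP_eq]; exact Submodule.starProjection_eq_self_iff.2 hx
  have hP_norm : ∀ x, ‖P x‖ ≤ ‖x‖ := by
    intro x
    rw [hP_eq]
    calc ‖((K.orthogonalProjectionOnto) x : L2Space N)‖ = ‖(K.orthogonalProjectionOnto) x‖ := rfl
      _ ≤ ‖(K.orthogonalProjectionOnto : L2Space N →L[ℂ] K)‖ * ‖x‖ :=
          ContinuousLinearMap.le_opNorm _ x
      _ ≤ 1 * ‖x‖ :=
          mul_le_mul_of_nonneg_right (Submodule.orthogonalProjectionOnto_norm_le (K := K)) (norm_nonneg x)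
      _ = ‖x‖ := one_mul _
  have hP_adj : ∀ x y, (inner ℂ (P x) y : ℂ) = inner ℂ x (P y) := fun x y =>
    Submodule.inner_starProjection_left_eq_right (K := K) x y
  have hP_normEq : ∀ x, ‖P x‖ = ‖x‖ → P x = x := by
    intro x hx
    have h0 : (inner ℂ (x - P x) (P x) : ℂ) = 0 :=
      Submodule.starProjection_inner_eq_zero (K := K) x (P x) (hP_mem x)
    have horth : (inner ℂ (P x) (x - P x) : ℂ) = 0 := by
      rw [← inner_conj_symm, h0, map_zero]
    have hpyth := @norm_add_sq ℂ _ _ _ _ (P x) (x - P x)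
    rw [add_sub_cancel, horth] at hpyth
    simp only [map_zero, mul_zero, add_zero, zero_add] at hpyth
    have hz : ‖x - P x‖ ^ 2 = 0 := by rw [hx] at hpyth; linarith
    have : x - P x = 0 := by
      have hnz : ‖x - P x‖ = 0 := by nlinarith [norm_nonneg (x - P x)]
      exact norm_eq_zero.1 hnz
    rw [sub_eq_zero] at this
    exact this.symm
  -- `h` belongs to `K`.
  have hhK : h ∈ K := by rw [← SetLike.mem_coe, hKset]; exact hh
  -- The linear operator `A = P ∘ (I - χ_D·) ∘ P`.
  set Pl : L2Space N →ₗ[ℂ] L2Space N :=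
    K.subtype.comp K.orthogonalProjectionOnto.toLinearMap with hPl_def
  set Ml : L2Space N →ₗ[ℂ] L2Space N :=
    { toFun := chiMul hD
      map_add' := chiMul_add hD
      map_smul' := chiMul_smul hD } with hMl_def
  set A : L2Space N →ₗ[ℂ] L2Space N :=
    Pl ∘ₗ (LinearMap.id - Ml) ∘ₗ Pl with hA_def
  have hA_apply : ∀ x, A x = P (P x - chiMul hD (P x)) := fun x => rfl
  -- symmetry
  have hsym : ∀ x y, (inner ℂ (A x) y : ℂ) = inner ℂ x (A y) := by
    intro x y
    rw [hA_apply, hA_apply, hP_adj, ← hP_adj x]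
    rw [inner_sub_left, inner_sub_right, chiMul_inner_symm]
  -- positivity
  have hpos : ∀ x, 0 ≤ (inner ℂ (A x) x : ℂ).re := by
    intro x
    rw [hA_apply, hP_adj]
    set u := P x with hu_def
    have hsplit : (inner ℂ (u - chiMul hD u) u : ℂ)
        = inner ℂ (u - chiMul hD u) (u - chiMul hD u) + inner ℂ (u - chiMul hD u) (chiMul hD u) := by
      rw [← inner_add_right, sub_add_cancel]
    have hz : (inner ℂ (u - chiMul hD u) (chiMul hD u) : ℂ) = 0 := by
      rw [← inner_conj_symm, chiMul_inner_compl, map_zero]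
    rw [hsplit, hz, add_zero]
    exact @inner_self_nonneg ℂ (L2Space N) _ _ _ (u - chiMul hD u)
  -- contraction
  have hnorm : ∀ x, ‖A x‖ ≤ ‖x‖ := by
    intro x
    rw [hA_apply]
    calc ‖P (P x - chiMul hD (P x))‖ ≤ ‖P x - chiMul hD (P x)‖ := hP_norm _
      _ ≤ ‖P x‖ := chiMul_compl_norm_le hD (P x)
      _ ≤ ‖x‖ := hP_norm x
  -- the iterates
  have hfK : ∀ k, f k ∈ K := by
    intro k
    cases k with
    | zero => rw [hf0]; exact hP_mem _
    | succ k => rw [hfrec k]; exact hP_mem _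
  have hgk : ∀ k, h - f k = (⇑A)^[k] (h - f 0) := by
    intro k
    induction k with
    | zero => rfl
    | succ k ih =>
      rw [Function.iterate_succ_apply', ← ih, hfrec k]
      show h - P (f k + chiMul hD (h - f k)) = A (h - f k)
      have hmem : h - f k ∈ K := Submodule.sub_mem K hhK (hfK k)
      rw [hA_apply, hP_id _ hmem, hP_sub, hP_add, hP_id _ (hfK k), hP_sub,
        hP_id _ hhK, hP_id _ (hfK k)]
      abel
  -- convergence of the iterates to a fixed point `u`
  obtain ⟨u, hufix, hulim⟩ := iter_tendsto_fixedPoint A hsym hpos hnorm (h - f 0)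
  have htendsg : Tendsto (fun k => h - f k) atTop (nhds u) := by
    have hfe : (fun k => (⇑A)^[k] (h - f 0)) = fun k => h - f k :=
      funext fun k => (hgk k).symm
    rwa [hfe] at hulim
  -- the fixed point satisfies `χ_D u = 0` and `u ∈ K`
  have hn1 : ‖u‖ ≤ ‖P u - chiMul hD (P u)‖ := by
    conv_lhs => rw [← hufix]
    rw [hA_apply]
    exact hP_norm _
  have hn2 : ‖P u - chiMul hD (P u)‖ ≤ ‖P u‖ := chiMul_compl_norm_le hD (P u)
  have hn3 : ‖P u‖ ≤ ‖u‖ := hP_norm u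
  have heq2 : ‖P u - chiMul hD (P u)‖ = ‖P u‖ := le_antisymm hn2 (by linarith)
  have hM0 : chiMul hD (P u) = 0 := chiMul_eq_zero_of_compl_norm_eq hD (P u) heq2
  have hu_eq : u = P u := by
    conv_lhs => rw [← hufix]
    rw [hA_apply, hM0, sub_zero, hP_id _ (hP_mem u)]
  have hchiu : chiMul hD u = 0 := by rw [hu_eq]; exact hM0
  have hu_mem : u ∈ K := by rw [hu_eq]; exact hP_mem u
  -- `u` is bandlimited and vanishes a.e. on `D`
  have hu_band : IsBandlimited S u := by
    rw [← SetLike.mem_coe, hKset] at hu_mem; exact hu_mem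
  obtain ⟨F, hFint, hFsupp, hFae⟩ := hu_band
  -- radius bound for `S`
  obtain ⟨R, hSR⟩ := hS.isBounded.subset_closedBall 0
  have hsupp' : ∀ ξ : EuclideanSpace ℝ (Fin N), max R 0 < ‖ξ‖ → F ξ = 0 := by
    intro ξ hξ
    apply hFsupp
    intro hmem
    have := hSR hmem
    rw [Metric.mem_closedBall, dist_zero_right] at this
    have := le_max_left R 0
    linarith [lt_of_le_of_lt (le_max_left R 0) hξ]
  -- indicator of `D` applied to `𝓕⁻ F` vanishes a.e.
  have hind : D.indicator (⇑u : EuclideanSpace ℝ (Fin N) → ℂ) =ᵐ[volume] 0 := by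
    have h1 := chiMul_coeFn hD u
    rw [hchiu] at h1
    have h2 := Lp.coeFn_zero ℂ 2 (volume : Measure (EuclideanSpace ℝ (Fin N)))
    exact (h1.symm.trans h2)
  have hindG : D.indicator (𝓕⁻ F) =ᵐ[volume]
      (0 : EuclideanSpace ℝ (Fin N) → ℂ) := by
    classical
    filter_upwards [hind, hFae] with x e1 e2
    simp only [Set.indicator_apply] at e1 ⊢
    split_ifs with hx
    · rw [← e2]
      simpa [hx] using e1
    · rfl
  -- continuity of `𝓕⁻ F`
  have hGcont : Continuous (𝓕⁻ F) := by
    apply VectorFourier.fourierIntegral_continuous Real.continuous_fourierChar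
      (by exact (continuous_inner (𝕜 := ℝ)
        (E := EuclideanSpace ℝ (Fin N))).neg) hFint
  -- a ball inside the interior of `D`
  obtain ⟨x₀, hx₀⟩ := hDint
  obtain ⟨ε, hεpos, hball⟩ := Metric.isOpen_iff.1 isOpen_interior x₀ hx₀
  -- `𝓕⁻ F` vanishes on this ball
  have hzero : ∀ x ∈ Metric.ball x₀ ε, 𝓕⁻ F x = 0 := by
    intro x hx
    by_contra hne
    set U := Metric.ball x₀ ε ∩ {y | 𝓕⁻ F y ≠ 0} with hU_def
    have hUopen : IsOpen U :=
      Metric.isOpen_ball.inter ((isOpen_compl_singleton).preimage hGcont)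
    have hUne : U.Nonempty := ⟨x, hx, hne⟩
    have hUsub : U ⊆ {y | D.indicator (𝓕⁻ F) y ≠ 0} := by
      rintro y ⟨hy1, hy2⟩
      have hyD : y ∈ D := interior_subset (hball hy1)
      simpa [Set.indicator_apply, hyD] using hy2
    have hnull : volume {y | D.indicator (𝓕⁻ F) y ≠ 0} = 0 := by
      have h3 := hindG
      rw [Filter.EventuallyEq, ae_iff] at h3
      simpa using h3
    have hU0 : volume U = 0 := measure_mono_null hUsub hnull
    exact (hUopen.measure_pos volume hUne).ne' hU0
  -- identity theorem: `𝓕⁻ F` vanishes everywhere, hence `u = 0`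
  have hGzero := fourierInv_eqZero_of_eqZero_ball F hFint (max R 0) (le_max_right R 0)
    hsupp' x₀ ε hεpos hzero
  have hu0 : u = 0 := by
    apply Lp.ext
    have h2 := Lp.coeFn_zero ℂ 2 (volume : Measure (EuclideanSpace ℝ (Fin N)))
    filter_upwards [hFae, h2] with x e1 e2
    rw [e1, hGzero x, e2]
    rfl
  rw [hu0] at htendsg
  -- conclude
  have hf_tend : Tendsto f atTop (nhds h) := by
    have h4 := (tendsto_const_nhds (x := h) (f := atTop)).sub htendsg
    simpa using h4
  simpa using hf_tend.norm
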